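/- Let E ⊆ 𝔽₂^k be a linear subspace of dimension m ≥ 2, and enumerate its elements as e₀, e₁, …, e_{2^m−1} in strictly increasing order of their integer values |e| = ∑_{j=1}^{k} e_j·2^{k−j} (most significant bit on the left). Then e₀ = 0 and, for every i ∈ {0, 1, …, m−1} and every j with 2^i ≤ j ≤ 2^{i+1}−1, one has e_j = e_{2^i} ⊕ e_{j−2^i}, where ⊕ denotes coordinatewise addition in 𝔽₂^k. -/

import Mathlib

/-- The integer value of a binary vector `v ∈ 𝔽₂^k`, with the most significant bit
on the left: `|v| = ∑_{j=1}^{k} v_j · 2^{k-j}`. -/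
def intVal {k : ℕ} (v : Fin k → ZMod 2) : ℕ :=
  ∑ j : Fin k, (v j).val * 2 ^ (k - 1 - (j : ℕ))

namespace Stmt0Aux

lemma z2val : ∀ z : ZMod 2, z.val ≤ 1 := by decide

lemma geom (n : ℕ) : ∑ r ∈ Finset.range n, 2^r = 2^n - 1 := by
  induction n with
  | zero => simp
  | succ n ih => rw [Finset.sum_range_succ, ih]; have := Nat.one_le_two_pow (n := n); omega

lemma intVal_eq_range {k : ℕ} (v : Fin k → ZMod 2) :
    intVal v = ∑ j ∈ Finset.range k,
      (if h : j < k then (v ⟨j, h⟩).val else 0) * 2 ^ (k - 1 - j) := by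
  rw [← Fin.sum_univ_eq_sum_range (fun j => (if h : j < k then (v ⟨j, h⟩).val else 0) * 2 ^ (k - 1 - j)) k]
  apply Finset.sum_congr rfl
  intro j _
  simp [intVal, dif_pos j.isLt]

lemma intVal_lt_intVal {k : ℕ} (u v : Fin k → ZMod 2) (b : Fin k)
    (hagree : ∀ j : Fin k, j < b → u j = v j) (hu : u b = 0) (hv : v b = 1) :
    intVal u < intVal v := by
  set F : (Fin k → ZMod 2) → ℕ → ℕ :=
    fun w j => (if h : j < k then (w ⟨j, h⟩).val else 0) * 2 ^ (k - 1 - j) with hF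
  have hbk : (b : ℕ) < k := b.isLt
  -- split the range sum at b
  have hsplit : ∀ w : Fin k → ZMod 2,
      intVal w = (∑ j ∈ Finset.range (b : ℕ), F w j) + (F w b +
        ∑ j ∈ Finset.Ico ((b : ℕ)+1) k, F w j) := by
    intro w
    rw [intVal_eq_range]
    rw [Finset.range_eq_Ico, ← Finset.sum_Ico_consecutive (fun j => F w j)
      (Nat.zero_le (b:ℕ)) (le_of_lt hbk)]
    rw [Finset.sum_eq_sum_Ico_succ_bot (by omega : (b:ℕ) < k), ← Finset.range_eq_Ico]
  -- head sums agree
  have hhead : ∑ j ∈ Finset.range (b : ℕ), F u j = ∑ j ∈ Finset.range (b : ℕ), F v j := by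
    apply Finset.sum_congr rfl
    intro j hj
    have hjb : j < (b : ℕ) := Finset.mem_range.mp hj
    have hjk : j < k := lt_trans hjb hbk
    simp only [hF, dif_pos hjk]
    rw [hagree ⟨j, hjk⟩ (by simpa [Fin.lt_def] using hjb)]
  -- tail bound
  have htail : ∑ j ∈ Finset.Ico ((b : ℕ)+1) k, F u j ≤ 2 ^ (k - 1 - (b:ℕ)) - 1 := by
    have h1 : ∑ j ∈ Finset.Ico ((b : ℕ)+1) k, F u j ≤
        ∑ j ∈ Finset.Ico ((b : ℕ)+1) k, 2 ^ (k - 1 - j) := by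
      apply Finset.sum_le_sum
      intro j _
      have : (if h : j < k then (u ⟨j, h⟩).val else 0) ≤ 1 := by
        split
        · exact z2val _
        · omega
      calc F u j ≤ 1 * 2 ^ (k - 1 - j) := Nat.mul_le_mul_right _ this
        _ = 2 ^ (k - 1 - j) := one_mul _
    have h2 : ∑ j ∈ Finset.Ico ((b : ℕ)+1) k, 2 ^ (k - 1 - j)
        = ∑ r ∈ Finset.range (k - 1 - (b:ℕ)), 2 ^ r := by
      rw [Finset.sum_Ico_eq_sum_range]
      have hlen : k - ((b:ℕ)+1) = k - 1 - (b:ℕ) := by omega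
      rw [hlen]
      rw [← Finset.sum_range_reflect (fun r => 2 ^ r) (k - 1 - (b:ℕ))]
      apply Finset.sum_congr rfl
      intro i hi
      have hik : i < k - 1 - (b:ℕ) := Finset.mem_range.mp hi
      congr 1
      omega
    rw [h2, geom] at h1
    exact h1
  -- b terms
  have hub : F u (b : ℕ) = 0 := by
    simp only [hF, dif_pos hbk]
    rw [show (⟨(b:ℕ), hbk⟩ : Fin k) = b from Fin.eta b hbk, hu]
    simp
  have hvb : F v (b : ℕ) = 2 ^ (k - 1 - (b:ℕ)) := by
    simp only [hF, dif_pos hbk]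
    rw [show (⟨(b:ℕ), hbk⟩ : Fin k) = b from Fin.eta b hbk, hv]
    rw [ZMod.val_one]
    ring
  have hpos : 0 < 2 ^ (k - 1 - (b:ℕ)) := Nat.pow_pos (by norm_num : 0 < 2)
  have := hsplit u
  have := hsplit v
  have hnn : 0 ≤ ∑ j ∈ Finset.Ico ((b : ℕ)+1) k, F v j := Nat.zero_le _
  omega

lemma exists_first_diff {k : ℕ} {u v : Fin k → ZMod 2} (h : u ≠ v) :
    ∃ b : Fin k, (∀ j : Fin k, j < b → u j = v j) ∧ u b ≠ v b := by
  classical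
  have hne : (Finset.univ.filter (fun j => u j ≠ v j)).Nonempty := by
    by_contra hc
    apply h
    funext j
    by_contra hj
    exact hc ⟨j, Finset.mem_filter.mpr ⟨Finset.mem_univ j, hj⟩⟩
  set S := Finset.univ.filter (fun j => u j ≠ v j)
  refine ⟨S.min' hne, ?_, ?_⟩
  · intro j hj
    by_contra hj'
    have : j ∈ S := Finset.mem_filter.mpr ⟨Finset.mem_univ j, hj'⟩
    exact absurd (S.min'_le j this) (not_le.mpr hj)
  · have : S.min' hne ∈ S := S.min'_mem hne
    exact (Finset.mem_filter.mp this).2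

lemma intVal_injective {k : ℕ} : Function.Injective (intVal (k := k)) := by
  intro u v h
  by_contra hne
  obtain ⟨b, hag, hb⟩ := exists_first_diff hne
  rcases (by decide : ∀ z : ZMod 2, z = 0 ∨ z = 1) (u b) with hu | hu <;>
    rcases (by decide : ∀ z : ZMod 2, z = 0 ∨ z = 1) (v b) with hv | hv
  · exact hb (hu.trans hv.symm)
  · exact absurd h (Nat.ne_of_lt (intVal_lt_intVal u v b hag hu hv))
  · exact absurd h.symm (Nat.ne_of_lt (intVal_lt_intVal v u b (fun j hj => (hag j hj).symm) hv hu))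
  · exact hb (hu.trans hv.symm)

lemma lemX {k : ℕ} (a x y : Fin k → ZMod 2) (hxy : intVal x < intVal y)
    (hax : intVal (a + y) < intVal (a + x)) :
    intVal (a + (x + y)) < intVal a := by
  have hne : x ≠ y := by rintro rfl; exact lt_irrefl _ hxy
  obtain ⟨b, hag, hb⟩ := exists_first_diff hne
  -- x b = 0, y b = 1
  have hx0 : x b = 0 ∧ y b = 1 := by
    rcases (by decide : ∀ z : ZMod 2, z = 0 ∨ z = 1) (x b) with hu | hu <;>
      rcases (by decide : ∀ z : ZMod 2, z = 0 ∨ z = 1) (y b) with hv | hv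
    · exact absurd (hu.trans hv.symm) hb
    · exact ⟨hu, hv⟩
    · exact absurd hxy (not_lt.mpr (le_of_lt
        (intVal_lt_intVal y x b (fun j hj => (hag j hj).symm) hv hu)))
    · exact absurd (hu.trans hv.symm) hb
  -- a b = 1
  have hab : a b = 1 := by
    rcases (by decide : ∀ z : ZMod 2, z = 0 ∨ z = 1) (a b) with ha | ha
    · exfalso
      have hlt : intVal (a + x) < intVal (a + y) := by
        apply intVal_lt_intVal _ _ b
        · intro j hj
          simp only [Pi.add_apply, hag j hj]
        · simp only [Pi.add_apply, ha, hx0.1, add_zero]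
        · simp only [Pi.add_apply, ha, hx0.2, zero_add]
      exact absurd hax (not_lt.mpr (le_of_lt hlt))
    · exact ha
  apply intVal_lt_intVal _ _ b
  · intro j hj
    simp only [Pi.add_apply, hag j hj]
    have : ∀ z w : ZMod 2, z + (w + w) = z := by decide
    exact this (a j) (y j)
  · simp only [Pi.add_apply, hab, hx0.1, hx0.2]
    decide
  · exact hab

lemma vadd_self {k : ℕ} (v : Fin k → ZMod 2) : v + v = 0 := by
  funext j
  have : ∀ z : ZMod 2, z + z = 0 := by decide
  exact this (v j)

lemma main_aux {k m : ℕ} (E : Submodule (ZMod 2) (Fin k → ZMod 2))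
    (f : ℕ → (Fin k → ZMod 2))
    (hmem : ∀ n, n < 2^m → f n ∈ E)
    (hsurj : ∀ v ∈ E, ∃ n, n < 2^m ∧ f n = v)
    (hmono : ∀ a b : ℕ, a < b → b < 2^m → intVal (f a) < intVal (f b)) :
    f 0 = 0 ∧ ∀ i, i < m → ∀ r, r < 2^i → f (2^i + r) = f (2^i) + f r := by
  have hMpos : 0 < 2^m := Nat.pow_pos (by norm_num : 0 < 2)
  have hlt_iff : ∀ a b : ℕ, a < 2^m → b < 2^m →
      (intVal (f a) < intVal (f b) ↔ a < b) := by
    intro a b ha hb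
    constructor
    · intro h
      by_contra hc
      push_neg at hc
      rcases Nat.eq_or_lt_of_le hc with rfl | h'
      · exact lt_irrefl _ h
      · exact absurd h (not_lt.mpr (le_of_lt (hmono b a h' ha)))
    · intro h; exact hmono a b h hb
  have hinj : ∀ a b : ℕ, a < 2^m → b < 2^m → f a = f b → a = b := by
    intro a b ha hb h
    rcases lt_trichotomy a b with h' | h' | h'
    · exact absurd (hmono a b h' hb) (by rw [h]; exact lt_irrefl _)
    · exact h'
    · exact absurd (hmono b a h' ha) (by rw [h]; exact lt_irrefl _)
  have hf0 : f 0 = 0 := by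
    obtain ⟨n, hn, hfn⟩ := hsurj 0 E.zero_mem
    have h0 : intVal (0 : Fin k → ZMod 2) = 0 := by simp [intVal]
    have hiv : intVal (f 0) = 0 := by
      rcases Nat.eq_zero_or_pos n with rfl | hp
      · rw [hfn, h0]
      · have := hmono 0 n hp hn
        rw [hfn, h0] at this
        omega
    exact intVal_injective (hiv.trans h0.symm)
  have hadd : ∀ a b : ℕ, a < 2^m → b < 2^m → ∃ c, c < 2^m ∧ f c = f a + f b := by
    intro a b ha hb
    obtain ⟨c, hc, hfc⟩ := hsurj (f a + f b) (E.add_mem (hmem a ha) (hmem b hb))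
    exact ⟨c, hc, hfc⟩
  -- the key inductive step
  have key : ∀ i, i < m →
      (∀ a b, a < 2^i → b < 2^i → ∃ c, c < 2^i ∧ f c = f a + f b) →
      ∀ r, r < 2^i → f (2^i + r) = f (2^i) + f r := by
    intro i him hCl
    set N := 2^i with hN
    have hNpos : 0 < N := Nat.pow_pos (by norm_num : 0 < 2)
    have hNM : N < 2^m := Nat.pow_lt_pow_right one_lt_two him
    have h2N : 2*N ≤ 2^m := by
      have : 2^(i+1) ≤ 2^m := Nat.pow_le_pow_right (by norm_num) him
      rw [pow_succ] at this
      omega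
    -- sub-step A : every f N + f r (r < N) equals some f c with N ≤ c < 2^m
    have hA : ∀ r, ∃ c, r < N → (N ≤ c ∧ c < 2^m ∧ f c = f N + f r) := by
      intro r
      by_cases hr : r < N
      · obtain ⟨c, hc, hfc⟩ := hadd N r hNM (lt_trans hr hNM)
        refine ⟨c, fun _ => ⟨?_, hc, hfc⟩⟩
        by_contra hcN
        push_neg at hcN
        obtain ⟨d, hd, hfd⟩ := hCl c r hcN hr
        have hdN : f d = f N := by
          rw [hfd, hfc, add_assoc, vadd_self, add_zero]
        have := hinj d N (lt_trans hd hNM) hNM hdN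
        omega
      · exact ⟨0, fun h => absurd h hr⟩
    choose σ hσ using hA
    have hσmem : ∀ r, r < N → N ≤ σ r ∧ σ r < 2^m ∧ f (σ r) = f N + f r :=
      fun r hr => hσ r hr
    have hσ0 : σ 0 = N := by
      obtain ⟨h1, h2, h3⟩ := hσmem 0 hNpos
      have : f (σ 0) = f N := by rw [h3, hf0, add_zero]
      exact hinj _ _ h2 hNM this
    -- sub-step B : σ is strictly monotone
    have hBmono : ∀ r s, r < s → s < N → σ r < σ s := by
      intro r s hrs hs
      have hr : r < N := lt_trans hrs hs
      obtain ⟨h1r, h2r, h3r⟩ := hσmem r hr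
      obtain ⟨h1s, h2s, h3s⟩ := hσmem s hs
      rw [← hlt_iff _ _ h2r h2s, h3r, h3s]
      have hne : f N + f r ≠ f N + f s := by
        intro h
        have hrs' : f r = f s := add_left_cancel h
        exact absurd (hinj r s (lt_trans hr hNM) (lt_trans hs hNM) hrs') (Nat.ne_of_lt hrs)
      rcases lt_trichotomy (intVal (f N + f r)) (intVal (f N + f s)) with h | h | h
      · exact h
      · exact absurd (intVal_injective h) hne
      · exfalso
        have hX := lemX (f N) (f r) (f s) (hmono r s hrs (lt_trans hs hNM)) h
        obtain ⟨q, hq, hfq⟩ := hsurj (f N + (f r + f s))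
          (E.add_mem (hmem N hNM) (E.add_mem (hmem r (lt_trans hr hNM))
            (hmem s (lt_trans hs hNM))))
        rw [← hfq] at hX
        have hqN : q < N := (hlt_iff q N hq hNM).mp hX
        obtain ⟨d, hd, hfd⟩ := hCl q s hqN hs
        have hfd' : f d = f N + f r := by
          rw [hfd, hfq, add_assoc, add_assoc, vadd_self, add_zero]
        obtain ⟨w, hw, hfw⟩ := hCl d r hd hr
        have : f w = f N := by rw [hfw, hfd', add_assoc, vadd_self, add_zero]
        have := hinj w N (lt_trans hw hNM) hNM this
        omega
    -- lower bound from strict monotonicity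
    have hlow : ∀ r, r < N → N + r ≤ σ r := by
      intro r
      induction r with
      | zero => intro _; rw [hσ0]; omega
      | succ n ih =>
        intro h
        have hn : n < N := by omega
        have h1 := ih hn
        have h2 := hBmono n (n+1) (by omega) h
        omega
    -- sub-step C : separation
    have hsep : ∀ q, q < 2^m → N ≤ q → (∀ r, r < N → f q ≠ f N + f r) →
        ∀ s, s < N → intVal (f N + f s) < intVal (f q) := by
      intro q hq hNq hnot s hs
      obtain ⟨h1s, h2s, h3s⟩ := hσmem s hs
      rw [← h3s]
      rcases lt_trichotomy (intVal (f (σ s))) (intVal (f q)) with h | h | h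
      · exact h
      · exfalso
        have : σ s = q := hinj _ _ h2s hq (intVal_injective h)
        exact hnot s hs (by rw [← this, h3s])
      · exfalso
        rw [h3s] at h
        obtain ⟨p, hp, hfp⟩ := hadd N q hNM hq
        have hpN : N < p := by
          rcases lt_trichotomy p N with h' | h' | h'
          · exfalso
            apply hnot p h'
            have : f N + f p = f q := by rw [hfp, ← add_assoc, vadd_self, zero_add]
            exact this.symm
          · exfalso
            subst h'
            have h2 := congrArg (fun w => f N + w) hfp
            rw [vadd_self, ← add_assoc, vadd_self, zero_add] at h2
            have : q = 0 := hinj q 0 hq hMpos (h2.symm.trans hf0.symm)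
            omega
          · exact h'
        have haxy : intVal (f N + (f N + f s)) < intVal (f N + f q) := by
          have e1 : f N + (f N + f s) = f s := by rw [← add_assoc, vadd_self, zero_add]
          rw [e1, ← hfp]
          exact hmono s p (lt_trans hs hpN) hp
        have hX := lemX (f N) (f q) (f N + f s) h haxy
        have e2 : f N + (f q + (f N + f s)) = f q + f s := by
          rw [show f N + (f q + (f N + f s)) = f N + f N + (f q + f s) by ring,
            vadd_self, zero_add]
        rw [e2] at hX
        obtain ⟨w, hw, hfw⟩ := hadd q s hq (lt_trans hs hNM)
        rw [← hfw] at hX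
        have hwN : w < N := (hlt_iff w N hw hNM).mp hX
        obtain ⟨d, hd, hfd⟩ := hCl w s hwN hs
        have : f d = f q := by rw [hfd, hfw, add_assoc, vadd_self, add_zero]
        have := hinj d q (lt_trans hd hNM) hq this
        omega
    -- sub-step D : σ r = N + r
    have hD : ∀ r, r < N → σ r = N + r := by
      intro r
      induction r using Nat.strong_induction_on with
      | _ r ih =>
        intro hr
        have hlo := hlow r hr
        by_contra hne
        have hgt : N + r < σ r := by omega
        have hq : N + r < 2^m := by omega
        have hnot : ∀ s, s < N → f (N + r) ≠ f N + f s := by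
          intro s hs hbad
          obtain ⟨h1s, h2s, h3s⟩ := hσmem s hs
          have heq : N + r = σ s := hinj (N + r) (σ s) hq h2s (by rw [hbad, h3s])
          rcases lt_trichotomy s r with h' | h' | h'
          · rw [ih s h' hs] at heq; omega
          · subst h'; omega
          · have := hBmono r s h' hs; omega
        have hlt := hsep (N + r) hq (by omega) hnot r hr
        obtain ⟨h1r, h2r, h3r⟩ := hσmem r hr
        rw [← h3r] at hlt
        have := (hlt_iff _ _ h2r hq).mp hlt
        omega
    intro r hr
    obtain ⟨h1r, h2r, h3r⟩ := hσmem r hr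
    rw [← hD r hr]
    exact h3r
  -- global induction on i
  have hCl : ∀ i, i ≤ m → ∀ a b, a < 2^i → b < 2^i → ∃ c, c < 2^i ∧ f c = f a + f b := by
    intro i
    induction i with
    | zero =>
      intro _ a b ha hb
      have ha0 : a = 0 := by omega
      have hb0 : b = 0 := by omega
      subst ha0; subst hb0
      exact ⟨0, by omega, by rw [hf0]; simp⟩
    | succ i ih =>
      intro hi a b ha hb
      have him : i < m := by omega
      have hih := ih (le_of_lt him)
      have hDi := key i him hih
      set N := 2^i with hN
      have hNpos : 0 < N := Nat.pow_pos (by norm_num : 0 < 2)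
      have hpow : 2^(i+1) = 2*N := by rw [pow_succ]; ring
      rw [hpow] at ha hb
      rcases Nat.lt_or_ge a N with haN | haN <;> rcases Nat.lt_or_ge b N with hbN | hbN
      · obtain ⟨c, hc, hfc⟩ := hih a b haN hbN
        exact ⟨c, by omega, hfc⟩
      · have hb' : b - N < N := by omega
        have hbe : N + (b - N) = b := by omega
        obtain ⟨c, hc, hfc⟩ := hih a (b - N) haN hb'
        refine ⟨N + c, by omega, ?_⟩
        have hfb := hDi (b - N) hb'
        rw [hbe] at hfb
        rw [hDi c hc, hfc, hfb]
        ring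
      · have ha' : a - N < N := by omega
        have hae : N + (a - N) = a := by omega
        obtain ⟨c, hc, hfc⟩ := hih (a - N) b ha' hbN
        refine ⟨N + c, by omega, ?_⟩
        have hfa := hDi (a - N) ha'
        rw [hae] at hfa
        rw [hDi c hc, hfc, hfa]
        ring
      · have ha' : a - N < N := by omega
        have hb' : b - N < N := by omega
        have hae : N + (a - N) = a := by omega
        have hbe : N + (b - N) = b := by omega
        obtain ⟨c, hc, hfc⟩ := hih (a - N) (b - N) ha' hb'
        refine ⟨c, by omega, ?_⟩
        have hfa := hDi (a - N) ha'
        rw [hae] at hfa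
        have hfb := hDi (b - N) hb'
        rw [hbe] at hfb
        rw [hfc, hfa, hfb,
          show (f N + f (a - N)) + (f N + f (b - N)) = f N + f N + (f (a - N) + f (b - N)) by ring,
          vadd_self, zero_add]
  exact ⟨hf0, fun i hi => key i hi (hCl i (le_of_lt hi))⟩

end Stmt0Aux

/-- If `E ⊆ 𝔽₂^k` is a linear subspace of dimension `m ≥ 2` whose
elements are enumerated as `e 0, …, e (2^m - 1)` in strictly increasing order of
integer value, then `e 0 = 0` and for every `i < m` and every `j` with
`2^i ≤ j ≤ 2^(i+1) - 1` one has `e j = e (2^i) + e (j - 2^i)`. -/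
theorem stmt0 {k m : ℕ} (hm : 2 ≤ m)
    (E : Submodule (ZMod 2) (Fin k → ZMod 2))
    (hdim : Module.finrank (ZMod 2) E = m)
    (e : Fin (2 ^ m) → (Fin k → ZMod 2))
    (hrange : ∀ v : Fin k → ZMod 2, v ∈ E ↔ ∃ i, e i = v)
    (hmono : StrictMono fun i => intVal (e i)) :
    e ⟨0, by positivity⟩ = 0 ∧
      ∀ i : ℕ, i < m → ∀ j : ℕ, 2 ^ i ≤ j → j ≤ 2 ^ (i + 1) - 1 →
        ∀ (hj : j < 2 ^ m) (h1 : 2 ^ i < 2 ^ m) (h2 : j - 2 ^ i < 2 ^ m),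
          e ⟨j, hj⟩ = e ⟨2 ^ i, h1⟩ + e ⟨j - 2 ^ i, h2⟩ := by
  classical
  set f : ℕ → (Fin k → ZMod 2) := fun n => if h : n < 2^m then e ⟨n, h⟩ else 0 with hf
  have hfeq : ∀ n (h : n < 2^m), f n = e ⟨n, h⟩ := fun n h => dif_pos h
  have hMpos : 0 < 2^m := Nat.pow_pos (by norm_num : 0 < 2)
  have hmem : ∀ n, n < 2^m → f n ∈ E := by
    intro n h
    rw [hfeq n h]
    exact (hrange _).mpr ⟨⟨n, h⟩, rfl⟩
  have hsurj' : ∀ v ∈ E, ∃ n, n < 2^m ∧ f n = v := by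
    intro v hv
    obtain ⟨i, hi⟩ := (hrange v).mp hv
    refine ⟨i.val, i.isLt, ?_⟩
    rw [hfeq i.val i.isLt]
    simpa using hi
  have hmono' : ∀ a b : ℕ, a < b → b < 2^m → intVal (f a) < intVal (f b) := by
    intro a b hab hb
    rw [hfeq a (lt_trans hab hb), hfeq b hb]
    exact hmono (show (⟨a, lt_trans hab hb⟩ : Fin (2^m)) < ⟨b, hb⟩ from hab)
  obtain ⟨h0, hrec⟩ := Stmt0Aux.main_aux E f hmem hsurj' hmono'
  constructor
  · rw [hfeq 0 hMpos] at h0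
    exact h0
  · intro i hi j hj1 hj2 hj h1 h2
    have hpow : 2^(i+1) = 2*2^i := by rw [pow_succ]; ring
    have hj2' := hj2
    rw [hpow] at hj2'
    set P := 2^i with hPdef
    have hPpos : 0 < P := hPdef ▸ Nat.pow_pos (by norm_num : 0 < 2)
    have hr : j - P < P := by omega
    have hkey := hrec i hi (j - P) hr
    rw [show P + (j - P) = j from by omega] at hkey
    rw [hfeq j hj, hfeq _ h1, hfeq _ h2] at hkey
    exact hkey
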